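/- For all positive integers n and i with 1 ≤ i ≤ n, the identity ∑_{j=1}^n (-1)^{j+1} C(2n-i-1, n-j-i+1) · C(n+j-2, n-1) · C(2n-j-1, n-1) = C(n+i-2, n-1) · C(2n-i-1, n-1) holds, where C(a,b) denotes the binomial coefficient. -/

import Mathlib

/-- Binomial coefficient `C(a,b)` with natural upper index and integer lower
index, with the convention that it vanishes for negative lower index. -/
def zchoose (a : ℕ) (b : ℤ) : ℤ := if 0 ≤ b then (a.choose b.toNat : ℤ) else 0

/-- Alternating-sum finite difference identity:
`∑ t (-1)^t C(k,t) C(a+t,m) = (-1)^k C(a, m-k)` for `k ≤ m`. -/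
lemma auxA : ∀ (k : ℕ) (a m : ℕ), k ≤ m →
    ∑ t ∈ Finset.range (k + 1),
      (-1 : ℤ) ^ t * (k.choose t : ℤ) * ((a + t).choose m : ℤ)
    = (-1 : ℤ) ^ k * (a.choose (m - k) : ℤ) := by
  intro k
  induction k with
  | zero => intro a m _; simp
  | succ k ih =>
    intro a m hk
    have hkm : k ≤ m := by omega
    rw [Finset.sum_range_succ']
    have hsplit : ∀ t ∈ Finset.range (k + 1),
        (-1 : ℤ) ^ (t + 1) * ((k+1).choose (t+1) : ℤ) * ((a + (t+1)).choose m : ℤ)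
        = (-((-1 : ℤ) ^ t * (k.choose t : ℤ) * (((a+1) + t).choose m : ℤ)))
          + (-1 : ℤ) ^ (t + 1) * (k.choose (t+1) : ℤ) * ((a + (t+1)).choose m : ℤ) := by
      intro t _
      rw [show a + (t+1) = a + 1 + t by omega, Nat.choose_succ_succ]
      push_cast
      ring
    rw [Finset.sum_congr rfl hsplit, Finset.sum_add_distrib, Finset.sum_neg_distrib]
    rw [ih (a+1) m hkm]
    have h2 : (∑ t ∈ Finset.range (k + 2),
            (-1 : ℤ) ^ t * (k.choose t : ℤ) * ((a + t).choose m : ℤ))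
        = (∑ t ∈ Finset.range (k + 1),
        (-1 : ℤ) ^ (t + 1) * (k.choose (t+1) : ℤ) * ((a + (t+1)).choose m : ℤ))
        + (-1 : ℤ) ^ 0 * ((k+1).choose 0 : ℤ) * ((a + 0).choose m : ℤ) := by
      rw [Finset.sum_range_succ']
      norm_num
    rw [add_assoc, ← h2, Finset.sum_range_succ, Nat.choose_succ_self]
    rw [ih a m hkm]
    simp only [Nat.cast_zero, mul_zero, zero_mul, add_zero]
    have hpas : ((a+1).choose (m - k) : ℤ) = (a.choose (m - k - 1) : ℤ) + (a.choose (m-k) : ℤ) := by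
      have : m - k = (m - k - 1) + 1 := by omega
      rw [this, Nat.choose_succ_succ]
      push_cast; ring
    have : m - (k+1) = m - k - 1 := by omega
    rw [this, hpas]
    ring

/-- Reversed form: `∑ j (-1)^j C(k,j) C(a+(k-j), m) = C(a, m-k)` for `k ≤ m`. -/
lemma auxB (k a m : ℕ) (hk : k ≤ m) :
    ∑ j ∈ Finset.range (k + 1),
      (-1 : ℤ) ^ j * (k.choose j : ℤ) * ((a + (k - j)).choose m : ℤ)
    = (a.choose (m - k) : ℤ) := by
  rw [← Finset.sum_range_reflect]
  have : ∀ t ∈ Finset.range (k + 1),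
      (-1 : ℤ) ^ (k + 1 - 1 - t) * (k.choose (k + 1 - 1 - t) : ℤ)
        * ((a + (k - (k + 1 - 1 - t))).choose m : ℤ)
      = (-1 : ℤ) ^ k * ((-1 : ℤ) ^ t * (k.choose t : ℤ) * ((a + t).choose m : ℤ)) := by
    intro t ht
    simp only [Finset.mem_range] at ht
    have ht' : t ≤ k := by omega
    have h1 : k + 1 - 1 - t = k - t := by omega
    have h2 : k - (k - t) = t := by omega
    have h3 : (-1 : ℤ) ^ (k - t) = (-1 : ℤ) ^ k * (-1 : ℤ) ^ t := by
      have h4 : (-1 : ℤ) ^ (k - t) * (-1 : ℤ) ^ t = (-1 : ℤ) ^ k := by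
        rw [← pow_add]; congr 1; omega
      have h5 : (-1 : ℤ) ^ t * (-1 : ℤ) ^ t = 1 := by
        rw [← pow_add]; exact Even.neg_one_pow (Even.add_self t)
      calc (-1 : ℤ) ^ (k - t) = (-1 : ℤ) ^ (k - t) * ((-1:ℤ)^t * (-1:ℤ)^t) := by rw [h5, mul_one]
        _ = ((-1 : ℤ) ^ (k - t) * (-1:ℤ)^t) * (-1:ℤ)^t := by ring
        _ = (-1 : ℤ) ^ k * (-1:ℤ)^t := by rw [h4]
    rw [h1, h2, Nat.choose_symm ht', h3]
    ring
  rw [Finset.sum_congr rfl this, ← Finset.mul_sum, auxA k a m hk, ← mul_assoc]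
  have : (-1 : ℤ) ^ k * (-1 : ℤ) ^ k = 1 := by
    rw [← pow_add]; exact Even.neg_one_pow (Even.add_self k)
  rw [this, one_mul]

theorem refined_asm_eigen_identity (n i : ℕ) (hi : 1 ≤ i) (hin : i ≤ n) :
    ∑ j ∈ Finset.Icc 1 n,
      (-1 : ℤ) ^ (j + 1) * zchoose (2 * n - i - 1) ((n : ℤ) - j - i + 1) *
        ((n + j - 2).choose (n - 1) : ℤ) * ((2 * n - j - 1).choose (n - 1) : ℤ)
    = ((n + i - 2).choose (n - 1) : ℤ) * ((2 * n - i - 1).choose (n - 1) : ℤ) := by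
  obtain ⟨d, rfl⟩ : ∃ d, i = d + 1 := ⟨i - 1, by omega⟩
  obtain ⟨e, rfl⟩ : ∃ e, n = d + 1 + e := ⟨n - (d + 1), by omega⟩
  have hA : 2 * (d + 1 + e) - (d + 1) - 1 = d + 2 * e := by omega
  have hB : (d + 1 + e) - 1 = d + e := by omega
  have hC : (d + 1 + e) + (d + 1) - 2 = 2 * d + e := by omega
  rw [hA, hB, hC]
  -- Step 1: terms with j > e + 1 vanish
  have hsub : Finset.Icc 1 (e + 1) ⊆ Finset.Icc 1 (d + 1 + e) := by
    apply Finset.Icc_subset_Icc_right; omega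
  rw [← Finset.sum_subset hsub ?vanish]
  case vanish =>
    intro j hj hj'
    simp only [Finset.mem_Icc] at hj hj'
    have hneg : ¬ (0 ≤ ((d + 1 + e : ℕ) : ℤ) - j - ((d+1 : ℕ) : ℤ) + 1) := by
      push_cast; omega
    unfold zchoose
    rw [if_neg hneg]
    ring
  -- Step 2: rewrite each term on Icc 1 (e+1)
  have hstep : ∀ j ∈ Finset.Icc 1 (e + 1),
      (-1 : ℤ) ^ (j + 1) * zchoose (d + 2 * e) (((d + 1 + e : ℕ) : ℤ) - j - ((d+1 : ℕ) : ℤ) + 1) *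
        (((d + 1 + e) + j - 2).choose (d + e) : ℤ) * ((2 * (d + 1 + e) - j - 1).choose (d + e) : ℤ)
      = ((d + 2 * e).choose (d + e) : ℤ) *
        ((-1 : ℤ) ^ (j - 1) * (e.choose (j - 1) : ℤ) *
          (((2 * d + e) + (e - (j - 1))).choose (d + e) : ℤ)) := by
    intro j hj
    simp only [Finset.mem_Icc] at hj
    obtain ⟨hj1, hj2⟩ := hj
    -- zchoose value
    have hval : ((d + 1 + e : ℕ) : ℤ) - j - ((d+1 : ℕ) : ℤ) + 1 = ((e + 1 - j : ℕ) : ℤ) := by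
      push_cast; omega
    have hz : zchoose (d + 2 * e) (((d + 1 + e : ℕ) : ℤ) - j - ((d+1 : ℕ) : ℤ) + 1)
        = ((d + 2 * e).choose (e + 1 - j) : ℤ) := by
      rw [hval]; unfold zchoose
      rw [if_pos (by positivity)]
      simp
    rw [hz]
    -- symmetry
    have hsymm : (d + 2 * e).choose (e + 1 - j) = (d + 2 * e).choose (d + e + (j - 1)) := by
      rw [← Nat.choose_symm (by omega : e + 1 - j ≤ d + 2 * e)]
      congr 1; omega
    rw [hsymm]
    have harg1 : (d + 1 + e) + j - 2 = d + e + (j - 1) := by omega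
    have harg2 : 2 * (d + 1 + e) - j - 1 = (2 * d + e) + (e - (j - 1)) := by omega
    rw [harg1, harg2]
    -- trinomial revision
    have htri : (d + 2 * e).choose (d + e + (j - 1)) * (d + e + (j-1)).choose (d + e)
        = (d + 2 * e).choose (d + e) * ((d + 2*e) - (d+e)).choose ((d + e + (j-1)) - (d+e)) := by
      exact Nat.choose_mul (by omega)
    have htri' : (d + 2 * e).choose (d + e + (j - 1)) * (d + e + (j-1)).choose (d + e)
        = (d + 2 * e).choose (d + e) * e.choose (j - 1) := by
      rw [htri]; congr 2 <;> omega
    have hsign : (-1 : ℤ) ^ (j + 1) = (-1 : ℤ) ^ (j - 1) := by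
      have : j + 1 = (j - 1) + 2 := by omega
      rw [this, pow_add]; ring
    rw [hsign]
    have key : (((d + 2 * e).choose (d + e + (j - 1)) : ℤ)) * (((d + e + (j-1)).choose (d+e)) : ℤ)
        = ((d + 2 * e).choose (d + e) : ℤ) * (e.choose (j - 1) : ℤ) := by
      exact_mod_cast congrArg (Nat.cast : ℕ → ℤ) htri'
    linear_combination ((-1:ℤ)^(j-1) * (((2 * d + e + (e - (j - 1))).choose (d + e)) : ℤ)) * key
  rw [Finset.sum_congr rfl hstep, ← Finset.mul_sum]
  -- Step 3: reindex Icc 1 (e+1) to range (e+1) and apply auxB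
  have hre : ∑ j ∈ Finset.Icc 1 (e + 1),
      ((-1 : ℤ) ^ (j - 1) * (e.choose (j - 1) : ℤ) *
        (((2 * d + e) + (e - (j - 1))).choose (d + e) : ℤ))
      = ∑ t ∈ Finset.range (e + 1),
      ((-1 : ℤ) ^ t * (e.choose t : ℤ) * (((2 * d + e) + (e - t)).choose (d + e) : ℤ)) := by
    rw [show Finset.Icc 1 (e+1) = Finset.Ico 1 (e+2) by exact (Finset.Ico_add_one_right_eq_Icc 1 (e+1)).symm,
      Finset.sum_Ico_eq_sum_range]
    apply Finset.sum_congr (by congr 1) (fun t _ => by norm_num)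
  rw [hre, auxB e (2 * d + e) (d + e) (by omega)]
  have h1 : (2 * d + e).choose (d + e - e) = (2 * d + e).choose (d + e) := by
    rw [show d + e - e = d by omega]
    exact Nat.choose_symm_of_eq_add (by omega)
  rw [h1]
  ring
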